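/- For 0 < λ < 1 let Ex[K] = Σ_{k≥0} (1−λ)λ^k/(1−λ^{k+1}) be the mean of the random variable K with tail distribution Pr[K > k] = (1−λ)λ^k/(1−λ^{k+1}). Then as λ → 1⁻, Ex[K] is asymptotic to log(1/(1−λ)); that is, Ex[K]/log(1/(1−λ)) → 1 as λ → 1⁻. -/

import Mathlib

open Real Filter

namespace Stmt9

noncomputable def a (l : ℝ) (k : ℕ) : ℝ := (1 - l) * l ^ k / (1 - l ^ (k + 1))

variable {l : ℝ}

lemma denom_pos (hl : l ∈ Set.Ioo (0:ℝ) 1) (n : ℕ) (hn : n ≠ 0) : 0 < 1 - l ^ n := by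
  have : l ^ n < 1 := pow_lt_one₀ hl.1.le hl.2 hn
  linarith

lemma a_pos (hl : l ∈ Set.Ioo (0:ℝ) 1) (k : ℕ) : 0 < a l k := by
  have h1 := denom_pos hl (k+1) (Nat.succ_ne_zero k)
  have h2 : 0 < l ^ k := pow_pos hl.1 k
  have h3 : (0:ℝ) < 1 - l := by linarith [hl.2]
  exact div_pos (mul_pos h3 h2) h1

lemma a_le_geom (hl : l ∈ Set.Ioo (0:ℝ) 1) (k : ℕ) : a l k ≤ l ^ k := by
  have h1 := denom_pos hl (k+1) (Nat.succ_ne_zero k)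
  have h2 : 0 < l ^ k := pow_pos hl.1 k
  rw [a, div_le_iff₀ h1]
  have h3 : l ^ (k+1) ≤ l := by
    calc l ^ (k+1) ≤ l ^ 1 := pow_le_pow_of_le_one hl.1.le hl.2.le (Nat.one_le_iff_ne_zero.2 (Nat.succ_ne_zero k))
    _ = l := pow_one l
  nlinarith

lemma a_le_inv (hl : l ∈ Set.Ioo (0:ℝ) 1) (k : ℕ) : a l k ≤ 1 / (k + 1) := by
  have h1 := denom_pos hl (k+1) (Nat.succ_ne_zero k)
  have h2 : 0 < l ^ k := pow_pos hl.1 k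
  have h3 : (0:ℝ) < 1 - l := by linarith [hl.2]
  have hgeom : (1 - l) * ∑ i ∈ Finset.range (k+1), l ^ i = 1 - l ^ (k+1) := by
    have := geom_sum_mul l (k+1); linear_combination -this
  have hsum : ((k:ℝ)+1) * l ^ k ≤ ∑ i ∈ Finset.range (k+1), l ^ i := by
    have := Finset.card_nsmul_le_sum (Finset.range (k+1)) (fun i => l ^ i) (l ^ k)
      (fun i hi => pow_le_pow_of_le_one hl.1.le hl.2.le
        (Nat.le_of_lt_succ (Finset.mem_range.1 hi)))
    simpa [nsmul_eq_mul] using this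
  rw [a, div_le_div_iff₀ h1 (by positivity)]
  nlinarith

lemma one_add_eq (hl : l ∈ Set.Ioo (0:ℝ) 1) (k : ℕ) :
    1 + l * a l k = (1 - l ^ (k + 2)) / (1 - l ^ (k + 1)) := by
  have h1 := denom_pos hl (k+1) (Nat.succ_ne_zero k)
  rw [a]
  field_simp
  ring

lemma log_term (hl : l ∈ Set.Ioo (0:ℝ) 1) (k : ℕ) :
    Real.log (1 + l * a l k) = Real.log (1 - l ^ (k + 2)) - Real.log (1 - l ^ (k + 1)) := by
  rw [one_add_eq hl k,
    Real.log_div (denom_pos hl (k+2) (by omega)).ne' (denom_pos hl (k+1) (by omega)).ne']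

lemma log_nonneg' (hl : l ∈ Set.Ioo (0:ℝ) 1) (k : ℕ) : 0 ≤ Real.log (1 + l * a l k) :=
  Real.log_nonneg (by nlinarith [a_pos hl k, hl.1])

lemma hasSum_log (hl : l ∈ Set.Ioo (0:ℝ) 1) :
    HasSum (fun k => Real.log (1 + l * a l k)) (-Real.log (1 - l)) := by
  rw [hasSum_iff_tendsto_nat_of_nonneg (log_nonneg' hl)]
  have hpart : ∀ N : ℕ, ∑ k ∈ Finset.range N, Real.log (1 + l * a l k)
      = Real.log (1 - l ^ (N + 1)) - Real.log (1 - l) := by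
    intro N
    have h := Finset.sum_range_sub (fun n => Real.log (1 - l ^ (n + 1))) N
    calc ∑ k ∈ Finset.range N, Real.log (1 + l * a l k)
        = ∑ k ∈ Finset.range N,
            (Real.log (1 - l ^ (k + 1 + 1)) - Real.log (1 - l ^ (k + 1))) := by
          refine Finset.sum_congr rfl fun k _ => ?_
          rw [log_term hl k]
      _ = Real.log (1 - l ^ (N + 1)) - Real.log (1 - l ^ (0 + 1)) := h
      _ = Real.log (1 - l ^ (N + 1)) - Real.log (1 - l) := by norm_num
  simp only [hpart]
  have h1 : Tendsto (fun N : ℕ => l ^ (N + 1)) atTop (nhds 0) := by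
    have := tendsto_pow_atTop_nhds_zero_of_lt_one hl.1.le hl.2
    exact this.comp (tendsto_add_atTop_nat 1)
  have h2 : Tendsto (fun N : ℕ => Real.log (1 - l ^ (N + 1))) atTop (nhds 0) := by
    have h1' : Tendsto (fun N : ℕ => 1 - l ^ (N + 1)) atTop (nhds 1) := by
      simpa using (tendsto_const_nhds.sub h1 : Tendsto (fun N : ℕ => 1 - l ^ (N+1)) atTop (nhds (1 - 0)))
    have := (Real.continuousAt_log one_ne_zero).tendsto.comp h1'
    simpa [Function.comp_def] using this
  have := h2.sub_const (Real.log (1 - l))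
  simpa using this

lemma summable_a (hl : l ∈ Set.Ioo (0:ℝ) 1) : Summable (a l) :=
  Summable.of_nonneg_of_le (fun k => (a_pos hl k).le) (fun k => a_le_geom hl k)
    (summable_geometric_of_lt_one hl.1.le hl.2)

lemma log_one_add_le (x : ℝ) (hx : 0 ≤ x) : Real.log (1 + x) ≤ x := by
  have := Real.log_le_sub_one_of_pos (show (0:ℝ) < 1 + x by linarith)
  linarith

lemma le_log_one_add (x : ℝ) (hx : 0 ≤ x) : x - x ^ 2 ≤ Real.log (1 + x) := by
  have h0 : (0:ℝ) < 1 + x := by linarith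
  have h := Real.log_le_sub_one_of_pos (show (0:ℝ) < (1 + x)⁻¹ by positivity)
  rw [Real.log_inv] at h
  have h2 : x / (1 + x) ≤ Real.log (1 + x) := by
    have : (1 + x)⁻¹ - 1 = -(x / (1 + x)) := by field_simp; ring
    rw [this] at h; linarith
  have h3 : x - x ^ 2 ≤ x / (1 + x) := by
    rw [le_div_iff₀ h0]; nlinarith
  linarith

lemma summable_inv_sq : Summable (fun k : ℕ => (1 / ((k:ℝ) + 1)) ^ 2) := by
  have h : Summable (fun n : ℕ => 1 / ((n:ℝ)) ^ 2) := summable_one_div_nat_pow.2 one_lt_two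
  have := (summable_nat_add_iff 1).2 h
  apply this.congr
  intro n
  push_cast
  rw [div_pow]
  norm_num

lemma tsum_inv_sq_le : (∑' k : ℕ, (1 / ((k:ℝ) + 1)) ^ 2) ≤ 2 := by
  have hb := hasSum_zeta_two
  have hs : Summable (fun n : ℕ => 1 / (n:ℝ) ^ 2) := hb.summable
  have h1 := Summable.tsum_eq_zero_add hs
  rw [hb.tsum_eq] at h1
  have h2 : (∑' k : ℕ, (1 / ((k:ℝ) + 1)) ^ 2) = ∑' n : ℕ, 1 / ((((n:ℕ):ℝ) + 1)) ^ 2 := by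
    congr 1; funext n; rw [div_pow]; norm_num
  have hpi : π < 3.15 := Real.pi_lt_d2
  have hpi0 : 0 < π := Real.pi_pos
  have h4 : (∑' n : ℕ, (1:ℝ) / (((n:ℕ):ℝ) + 1) ^ 2) = π ^ 2 / 6 := by
    norm_num at h1
    rw [h1]
    simp [one_div]
  rw [h2, h4]; nlinarith

lemma lower_bound (hl : l ∈ Set.Ioo (0:ℝ) 1) : -Real.log (1 - l) ≤ ∑' k, a l k := by
  have hsa := summable_a hl
  have hsl := (hasSum_log hl).summable
  have h1 : -Real.log (1 - l) = ∑' k, Real.log (1 + l * a l k) := (hasSum_log hl).tsum_eq.symm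
  rw [h1]
  apply Summable.tsum_le_tsum _ hsl hsa
  intro k
  have hak := (a_pos hl k).le
  have h2 : Real.log (1 + l * a l k) ≤ l * a l k :=
    log_one_add_le _ (mul_nonneg hl.1.le hak)
  nlinarith [hl.1, hl.2]

lemma upper_bound (hl : l ∈ Set.Ioo (0:ℝ) 1) :
    l * (∑' k, a l k) ≤ -Real.log (1 - l) + 2 := by
  have hsa := summable_a hl
  have hsl := (hasSum_log hl).summable
  have h1 : l * (∑' k, a l k) = ∑' k, l * a l k := (tsum_mul_left).symm
  have hterm : ∀ k, l * a l k ≤ Real.log (1 + l * a l k) + (1 / ((k:ℝ) + 1)) ^ 2 := by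
    intro k
    have hak := (a_pos hl k).le
    have hx : (0:ℝ) ≤ l * a l k := mul_nonneg hl.1.le hak
    have h2 := le_log_one_add (l * a l k) hx
    have h3 : l * a l k ≤ 1 / ((k:ℝ) + 1) := by
      have := a_le_inv hl k
      nlinarith [hl.1, hl.2]
    have h4 : (l * a l k) ^ 2 ≤ (1 / ((k:ℝ) + 1)) ^ 2 := by
      apply sq_le_sq' _ h3
      have : (0:ℝ) < 1 / ((k:ℝ) + 1) := by positivity
      linarith
    linarith
  have h5 : (∑' k, l * a l k)
      ≤ ∑' k, (Real.log (1 + l * a l k) + (1 / ((k:ℝ) + 1)) ^ 2) := by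
    apply Summable.tsum_le_tsum hterm (hsa.mul_left l) (hsl.add summable_inv_sq)
  rw [h1]
  calc (∑' k : ℕ, l * a l k)
      ≤ ∑' k : ℕ, (Real.log (1 + l * a l k) + (1 / ((k:ℝ) + 1)) ^ 2) := h5
    _ = (∑' k : ℕ, Real.log (1 + l * a l k)) + ∑' k : ℕ, (1 / ((k:ℝ) + 1)) ^ 2 :=
        Summable.tsum_add hsl summable_inv_sq
    _ ≤ -Real.log (1 - l) + 2 := by
        rw [(hasSum_log hl).tsum_eq]
        linarith [tsum_inv_sq_le]

lemma neg_log_pos (hl : l ∈ Set.Ioo (0:ℝ) 1) : 0 < -Real.log (1 - l) := by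
  have : Real.log (1 - l) < 0 := Real.log_neg (by linarith [hl.2]) (by linarith [hl.1])
  linarith

end Stmt9

open Stmt9 in
/-- The mean of `K`, `Ex[K] = Σ_{k≥0} (1−λ)λ^k/(1−λ^{k+1})`, is asymptotic to
`log(1/(1−λ))` as `λ → 1⁻`. -/
theorem stmt9 :
    Filter.Tendsto (fun lam : ℝ =>
        (∑' k : ℕ, (1 - lam) * lam ^ k / (1 - lam ^ (k + 1))) /
          Real.log (1 / (1 - lam)))
      (nhdsWithin 1 (Set.Ioo 0 1)) (nhds 1) := by
  set F := nhdsWithin (1:ℝ) (Set.Ioo 0 1) with hF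
  have hmem : ∀ᶠ l in F, l ∈ Set.Ioo (0:ℝ) 1 := eventually_mem_nhdsWithin
  -- L tends to atTop
  have hsub : Tendsto (fun l : ℝ => 1 - l) F (nhdsWithin 0 (Set.Ioi 0)) := by
    rw [tendsto_nhdsWithin_iff]
    constructor
    · have : Tendsto (fun l : ℝ => 1 - l) (nhds 1) (nhds (1 - 1)) :=
        (continuous_const.sub continuous_id).tendsto 1
      simpa using this.mono_left nhdsWithin_le_nhds
    · exact hmem.mono fun l hl => by simp [Set.mem_Ioi]; linarith [hl.2]
  have hL : Tendsto (fun l : ℝ => -Real.log (1 - l)) F atTop := by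
    have h1 : Tendsto (fun l : ℝ => Real.log (1 - l)) F atBot :=
      Real.tendsto_log_nhdsGT_zero.comp hsub
    exact tendsto_neg_atBot_atTop.comp h1
  have hl1 : Tendsto (fun l : ℝ => l) F (nhds 1) := tendsto_id.mono_left nhdsWithin_le_nhds
  -- upper bound function tends to 1
  have hupper : Tendsto (fun l : ℝ => 1 / l + 2 / (l * (-Real.log (1 - l)))) F (nhds 1) := by
    have h1 : Tendsto (fun l : ℝ => 1 / l) F (nhds 1) := by
      simpa [one_div] using (hl1.inv₀ one_ne_zero)
    have h2 : Tendsto (fun l : ℝ => l * (-Real.log (1 - l))) F atTop :=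
      Tendsto.pos_mul_atTop one_pos hl1 hL
    have h3 : Tendsto (fun l : ℝ => 2 / (l * (-Real.log (1 - l)))) F (nhds 0) :=
      Tendsto.div_atTop tendsto_const_nhds h2
    simpa using h1.add h3
  apply tendsto_of_tendsto_of_tendsto_of_le_of_le'
    (tendsto_const_nhds : Tendsto (fun _ : ℝ => (1:ℝ)) F (nhds 1)) hupper
  · -- lower: 1 ≤ S / L
    refine hmem.mono fun l hl => ?_
    have hLpos := neg_log_pos hl
    have hS := lower_bound hl
    have hlog : Real.log (1 / (1 - l)) = -Real.log (1 - l) := by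
      rw [one_div, Real.log_inv]
    have hSeq : (∑' k : ℕ, (1 - l) * l ^ k / (1 - l ^ (k + 1))) = ∑' k, a l k := rfl
    rw [hSeq, hlog, le_div_iff₀ hLpos]
    linarith
  · -- upper: S / L ≤ 1/l + 2/(l * L)
    refine hmem.mono fun l hl => ?_
    have hLpos := neg_log_pos hl
    have hlpos := hl.1
    have hS := upper_bound hl
    have hlog : Real.log (1 / (1 - l)) = -Real.log (1 - l) := by
      rw [one_div, Real.log_inv]
    have hSeq : (∑' k : ℕ, (1 - l) * l ^ k / (1 - l ^ (k + 1))) = ∑' k, a l k := rfl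
    rw [hSeq, hlog]
    set L := -Real.log (1 - l) with hLd
    have hRHS : 1 / l + 2 / (l * L) = (L + 2) / (l * L) := by
      field_simp
    rw [hRHS, div_le_div_iff₀ hLpos (by positivity)]
    nlinarith
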